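/- The multiplicative congruential generator R of Matlab's randn has maximal period 2^32: for every element b of ZMod 2^32, the least positive integer n such that the n-fold iterate R^[n](b) equals b is 2^32. -/

import Mathlib

set_option maxRecDepth 2000

open Finset

/-- The congruential register update `icng = 69069*icng + 1234567` of Matlab's
`randn`, as a map on `ZMod 2^32`. -/
def R (x : ZMod (2 ^ 32)) : ZMod (2 ^ 32) := 69069 * x + 1234567

lemma R_iterate (n : ℕ) (x : ZMod (2 ^ 32)) :
    R^[n] x = 69069 ^ n * x + 1234567 * ∑ i ∈ range n, (69069 : ZMod (2 ^ 32)) ^ i := by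
  induction n with
  | zero => simp
  | succ n ih =>
    rw [Function.iterate_succ_apply', ih, R, geom_sum_succ]
    ring

lemma two_pow_zero : (2 : ZMod (2 ^ 32)) ^ 32 = 0 := by
  have : ((2 ^ 32 : ℕ) : ZMod (2 ^ 32)) = 0 := ZMod.natCast_self _
  push_cast at this
  exact this

lemma odd_unit (y : ZMod (2 ^ 32)) : IsUnit (2 * y + 1) := by
  apply IsUnit.of_mul_eq_one (∑ i ∈ range 32, (-(2 * y)) ^ i)
  have h := geom_sum_mul (-(2 * y)) 32
  have h32 : (-(2 * y)) ^ 32 = 0 := by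
    rw [neg_pow, mul_pow, two_pow_zero]
    ring
  rw [h32] at h
  linear_combination -h

lemma s_double (a m : ℕ) :
    ∑ i ∈ range (2 * m), a ^ i = (∑ i ∈ range m, a ^ i) * (1 + a ^ m) := by
  rw [two_mul, Finset.sum_range_add]
  simp only [pow_add]
  rw [← Finset.mul_sum]
  ring

lemma s_pow (k : ℕ) :
    ∃ o, Odd o ∧ ∑ i ∈ range (2 ^ k), (69069 : ℕ) ^ i = 2 ^ k * o := by
  induction k with
  | zero => exact ⟨1, odd_one, by simp⟩
  | succ k ih =>
    obtain ⟨o, ho, hs⟩ := ih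
    have hm : (69069 : ℕ) ^ (2 ^ k) % 4 = 1 := by
      rw [Nat.pow_mod]; norm_num
    obtain ⟨q, hq⟩ : ∃ q, (69069 : ℕ) ^ (2 ^ k) = 4 * q + 1 :=
      ⟨(69069 : ℕ) ^ (2 ^ k) / 4, by omega⟩
    refine ⟨o * (2 * q + 1), ho.mul (odd_two_mul_add_one q), ?_⟩
    have hd := s_double 69069 (2 ^ k)
    rw [pow_succ, mul_comm (2 ^ k) 2, hd, hs, hq]
    ring

lemma key (b : ZMod (2 ^ 32)) (n : ℕ) :
    R^[n] b = b ↔ (2 ^ 32 : ℕ) ∣ ∑ i ∈ range n, (69069 : ℕ) ^ i := by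
  rw [R_iterate]
  set S := ∑ i ∈ range n, (69069 : ZMod (2 ^ 32)) ^ i with hS
  have hcast : ((∑ i ∈ range n, (69069 : ℕ) ^ i : ℕ) : ZMod (2 ^ 32)) = S := by
    rw [hS]; push_cast; rfl
  have hgs : (69069 : ZMod (2 ^ 32)) ^ n - 1 = S * (69069 - 1) := (geom_sum_mul _ n).symm
  have hu : IsUnit (69068 * b + 1234567 : ZMod (2 ^ 32)) := by
    have h := odd_unit (34534 * b + 617283)
    have e : (2 : ZMod (2 ^ 32)) * (34534 * b + 617283) + 1 = 69068 * b + 1234567 := by ring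
    rwa [e] at h
  have hiff : (69069 ^ n * b + 1234567 * S = b) ↔ S * (69068 * b + 1234567) = 0 := by
    constructor
    · intro h; linear_combination h - b * hgs
    · intro h; linear_combination h + b * hgs
  rw [hiff, hu.mul_left_eq_zero, ← hcast, ZMod.natCast_eq_zero_iff]

/-- The multiplicative congruential generator `R` of Matlab's `randn` has
maximal period `2^32`: for every `b`, the least positive integer `n` with
`R^[n] b = b` is `2^32`. -/
theorem randn_cng_maximal_period (b : ZMod (2 ^ 32)) :
    IsLeast {n : ℕ | 0 < n ∧ R^[n] b = b} (2 ^ 32) := by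
  have hA : R^[2 ^ 32] b = b := by
    rw [key]
    obtain ⟨o, ho, hs⟩ := s_pow 32
    exact ⟨o, hs⟩
  constructor
  · exact ⟨by norm_num, hA⟩
  · rintro n ⟨hn, hnb⟩
    by_contra hlt
    push_neg at hlt
    have hg : Function.IsPeriodicPt R (Nat.gcd n (2 ^ 32)) b :=
      Function.IsPeriodicPt.gcd (hnb : Function.IsPeriodicPt R n b) hA
    have hgd : Nat.gcd n (2 ^ 32) ∣ 2 ^ 32 := Nat.gcd_dvd_right _ _
    obtain ⟨k, hk, hgk⟩ := (Nat.dvd_prime_pow Nat.prime_two).1 hgd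
    have hgn : Nat.gcd n (2 ^ 32) ≤ n := Nat.le_of_dvd hn (Nat.gcd_dvd_left _ _)
    have hk31 : k ≤ 31 := by
      by_contra h
      push_neg at h
      have hk32 : k = 32 := by omega
      rw [hk32] at hgk
      omega
    have hdvd : Nat.gcd n (2 ^ 32) ∣ 2 ^ 31 := hgk ▸ pow_dvd_pow 2 hk31
    obtain ⟨t, ht⟩ := hdvd
    have h31 : R^[2 ^ 31] b = b := by
      have h := hg.mul_const t
      rw [← ht] at h
      exact h
    have hdd := (key b (2 ^ 31)).1 h31
    obtain ⟨o, ho, hs⟩ := s_pow 31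
    rw [hs] at hdd
    have h2o : (2 : ℕ) ∣ o := by
      have h2 : (2 ^ 31 * 2 : ℕ) ∣ 2 ^ 31 * o := by
        rw [show (2 ^ 31 * 2 : ℕ) = 2 ^ 32 by norm_num]
        exact hdd
      exact (Nat.mul_dvd_mul_iff_left (by positivity)).1 h2
    obtain ⟨r, hr⟩ := ho
    omega
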